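/- Let μ¹ and μ² be probability measures on A × X, where X = {0,...,K}^ℤ with the product partial order and A is a compact metric space. The following are equivalent: (i) for every bounded measurable local function f on A × X such that f(α,·) is nondecreasing for all α, ∫ f dμ¹ ≤ ∫ f dμ²; (ii) μ¹ and μ² have a common α-marginal Q, and μ¹(dη|α) ≤ μ²(dη|α) stochastically for Q-a.e. α. -/

import Mathlib

open MeasureTheory ProbabilityTheory

/-- Particle configurations with at most `K` particles per site. -/
abbrev Config (K : ℕ) := ℤ → Fin (K + 1)

/-- A function on `A × X` is local if it depends on the configuration only
through finitely many sites. -/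
def IsLocalFn {A : Type*} {K : ℕ} (f : A × Config K → ℝ) : Prop :=
  ∃ Λ : Finset ℤ, ∀ (α : A) (η η' : Config K),
    (∀ x ∈ Λ, η x = η' x) → f (α, η) = f (α, η')

section Aux

variable {K : ℕ}

/-- A set whose membership depends only on the coordinates in `Finset.Icc (-n) n`
is measurable. -/
lemma measurableSet_of_local {S : Set (Config K)} (n : ℕ)
    (h : ∀ η η' : Config K, (∀ x ∈ Finset.Icc (-(n:ℤ)) n, η x = η' x) → (η ∈ S → η' ∈ S)) :
    MeasurableSet S := by
  classical
  have : S = (fun (η : Config K) (x : (Finset.Icc (-(n:ℤ)) n : Finset ℤ)) => η x) ⁻¹'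
      ((fun (η : Config K) (x : (Finset.Icc (-(n:ℤ)) n : Finset ℤ)) => η x) '' S) := by
    ext η; constructor
    · intro hη; exact Set.mem_preimage.2 ⟨η, hη, rfl⟩
    · rintro ⟨ξ, hξ, hproj⟩
      exact h ξ η (fun x hx => congrFun hproj ⟨x, hx⟩) hξ
  rw [this]
  exact (Set.to_countable _).measurableSet.preimage
    (measurable_pi_lambda _ fun x => measurable_pi_apply _)

/-- Core lemma: if `ν1 S ≤ ν2 S` for every local upper set `S`, then the same holds
for every measurable upper set. -/
lemma meas_mono_of_upper_local
    (ν1 ν2 : Measure (Config K)) [IsProbabilityMeasure ν1] [IsProbabilityMeasure ν2]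
    (h : ∀ (n : ℕ) (S : Set (Config K)), IsUpperSet S →
      (∀ η η' : Config K, (∀ x ∈ Finset.Icc (-(n:ℤ)) n, η x = η' x) → (η ∈ S → η' ∈ S)) →
      ν1 S ≤ ν2 S)
    {U : Set (Config K)} (hU : MeasurableSet U) (hUp : IsUpperSet U) : ν1 U ≤ ν2 U := by
  classical
  rw [hU.measure_eq_iSup_isClosed_of_ne_top (measure_ne_top _ _)]
  refine iSup_le fun F => iSup_le fun hFU => iSup_le fun hF => ?_
  set C : ℕ → Set (Config K) :=
    fun n => {η | ∃ ξ ∈ F, ∀ x ∈ Finset.Icc (-(n:ℤ)) n, ξ x ≤ η x} with hC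
  have hCup : ∀ n, IsUpperSet (C n) := by
    rintro n η η' hle ⟨ξ, hξF, hξle⟩
    exact ⟨ξ, hξF, fun x hx => (hξle x hx).trans (hle x)⟩
  have hCloc : ∀ n : ℕ, ∀ η η' : Config K,
      (∀ x ∈ Finset.Icc (-(n:ℤ)) n, η x = η' x) → (η ∈ C n → η' ∈ C n) := by
    rintro n η η' heq ⟨ξ, hξF, hξle⟩
    exact ⟨ξ, hξF, fun x hx => (heq x hx) ▸ hξle x hx⟩
  have hFC : ∀ n, F ⊆ C n := fun n η hη => ⟨η, hη, fun x _ => le_rfl⟩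
  have hCmeas : ∀ n, MeasurableSet (C n) := fun n => measurableSet_of_local n (hCloc n)
  have hanti : Antitone C := by
    rintro m n hmn η ⟨ξ, hξF, hξle⟩
    refine ⟨ξ, hξF, fun x hx => hξle x ?_⟩
    simp only [Finset.mem_Icc] at hx ⊢
    omega
  have hCU : (⋂ n, C n) ⊆ U := by
    intro η hη
    set G : ℕ → Set (Config K) :=
      fun n => F ∩ ⋂ x ∈ Finset.Icc (-(n:ℤ)) n, {ξ : Config K | ξ x ≤ η x} with hG
    have hGclosed : ∀ n, IsClosed (G n) := by
      intro n
      refine hF.inter (isClosed_biInter fun x _ => ?_)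
      have : {ξ : Config K | ξ x ≤ η x} = (fun ξ : Config K => ξ x) ⁻¹' {v | v ≤ η x} := rfl
      rw [this]
      exact IsClosed.preimage (continuous_apply x) (isClosed_discrete {v | v ≤ η x})
    have hGne : ∀ n, (G n).Nonempty := by
      intro n
      obtain ⟨ξ, hξF, hξle⟩ := Set.mem_iInter.1 hη n
      exact ⟨ξ, hξF, Set.mem_biInter fun x hx => hξle x hx⟩
    have hGanti : ∀ n, G (n + 1) ⊆ G n := by
      rintro n ξ ⟨h1, h2⟩
      refine ⟨h1, Set.mem_biInter fun x hx => ?_⟩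
      have hx' : x ∈ Finset.Icc (-(n:ℤ)) n := hx
      simp only [Finset.mem_Icc] at hx'
      exact Set.mem_iInter₂.1 h2 x (by simp only [Finset.mem_Icc]; push_cast; omega)
    obtain ⟨ζ, hζ⟩ := IsCompact.nonempty_iInter_of_sequence_nonempty_isCompact_isClosed
      G hGanti hGne ((hGclosed 0).isCompact) hGclosed
    have hζF : ζ ∈ F := (Set.mem_iInter.1 hζ 0).1
    have hζη : ζ ≤ η := by
      intro x
      have := (Set.mem_iInter.1 hζ x.natAbs).2
      have := Set.mem_iInter₂.1 this x (by
        simp only [Finset.mem_Icc]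
        omega)
      exact this
    exact hUp hζη (hFU hζF)
  calc ν1 F ≤ ν1 (⋂ n, C n) := measure_mono (Set.subset_iInter hFC)
    _ = ⨅ n, ν1 (C n) := Directed.measure_iInter (fun n => (hCmeas n).nullMeasurableSet)
        (hanti.directed_ge) ⟨0, measure_ne_top _ _⟩
    _ ≤ ⨅ n, ν2 (C n) := iInf_mono fun n => h n (C n) (hCup n) (hCloc n)
    _ = ν2 (⋂ n, C n) := (Directed.measure_iInter (fun n => (hCmeas n).nullMeasurableSet)
        (hanti.directed_ge) ⟨0, measure_ne_top _ _⟩).symm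
    _ ≤ ν2 U := measure_mono hCU

/-- Layer-cake comparison: if `ν1 U ≤ ν2 U` for all measurable upper sets, then monotone
bounded measurable functions have larger integral under `ν2`. -/
lemma integral_mono_of_upper (ν1 ν2 : Measure (Config K))
    [IsProbabilityMeasure ν1] [IsProbabilityMeasure ν2]
    (h : ∀ U : Set (Config K), MeasurableSet U → IsUpperSet U → ν1 U ≤ ν2 U)
    (g : Config K → ℝ) (hg : Measurable g) (C : ℝ) (hb : ∀ η, |g η| ≤ C)
    (hmono : Monotone g) : ∫ η, g η ∂ν1 ≤ ∫ η, g η ∂ν2 := by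
  have hgi : ∀ (ν : Measure (Config K)) [IsProbabilityMeasure ν], Integrable g ν := by
    intro ν _
    exact ⟨hg.aestronglyMeasurable,
      HasFiniteIntegral.of_bounded (C := C) (ae_of_all _ fun η => by
        simpa [Real.norm_eq_abs] using hb η)⟩
  set g' : Config K → ℝ := fun η => g η + C with hg'
  have hg'nn : ∀ η, 0 ≤ g' η := fun η => by
    have := abs_le.1 (hb η); simp [hg']; linarith
  have hg'm : Measurable g' := hg.add_const C
  have key : ∀ (ν : Measure (Config K)) [IsProbabilityMeasure ν],
      ∫⁻ η, ENNReal.ofReal (g' η) ∂ν = ∫⁻ t in Set.Ioi (0:ℝ), ν {η | t < g' η} := by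
    intro ν _
    exact lintegral_eq_lintegral_meas_lt ν (ae_of_all _ hg'nn) hg'm.aemeasurable
  have hmono' : ∀ t : ℝ, IsUpperSet {η | t < g' η} := by
    intro t η η' hle hη
    have h1 : t < g' η := hη
    have h2 : g' η ≤ g' η' := add_le_add_left (hmono hle) C
    exact Set.mem_setOf.2 (lt_of_lt_of_le h1 h2)
  have hmeas' : ∀ t : ℝ, MeasurableSet {η | t < g' η} :=
    fun t => measurableSet_lt measurable_const hg'm
  have hlin : ∫⁻ η, ENNReal.ofReal (g' η) ∂ν1 ≤ ∫⁻ η, ENNReal.ofReal (g' η) ∂ν2 := by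
    rw [key ν1, key ν2]
    exact lintegral_mono fun t => h _ (hmeas' t) (hmono' t)
  have hne : ∀ (ν : Measure (Config K)) [IsProbabilityMeasure ν],
      ∫⁻ η, ENNReal.ofReal (g' η) ∂ν ≠ ⊤ := by
    intro ν _
    have hb' : ∀ η, ENNReal.ofReal (g' η) ≤ ENNReal.ofReal (C + C) := fun η =>
      ENNReal.ofReal_le_ofReal (by have := abs_le.1 (hb η); simp only [hg']; linarith)
    have : ∫⁻ η, ENNReal.ofReal (g' η) ∂ν ≤ ENNReal.ofReal (C + C) := by
      calc ∫⁻ η, ENNReal.ofReal (g' η) ∂ν ≤ ∫⁻ _, ENNReal.ofReal (C + C) ∂ν :=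
            lintegral_mono hb'
        _ = ENNReal.ofReal (C + C) := by simp
    exact ne_top_of_le_ne_top ENNReal.ofReal_ne_top this
  have hint : ∀ (ν : Measure (Config K)) [IsProbabilityMeasure ν],
      ∫ η, g' η ∂ν = (∫⁻ η, ENNReal.ofReal (g' η) ∂ν).toReal := by
    intro ν _
    exact integral_eq_lintegral_of_nonneg_ae (ae_of_all _ hg'nn) hg'm.aestronglyMeasurable
  have h2 : ∫ η, g' η ∂ν1 ≤ ∫ η, g' η ∂ν2 := by
    rw [hint ν1, hint ν2]
    exact ENNReal.toReal_le_toReal (hne ν1) (hne ν2) |>.2 hlin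
  have expand : ∀ (ν : Measure (Config K)) [IsProbabilityMeasure ν],
      ∫ η, g' η ∂ν = ∫ η, g η ∂ν + C := by
    intro ν _
    rw [hg']
    rw [integral_add (hgi ν) (integrable_const C), integral_const]
    simp
  rw [expand ν1, expand ν2] at h2
  linarith

end Aux

/-- For probability measures `μ1, μ2` on `A × X`,
`X = {0,…,K}^ℤ`, the following are equivalent:
(i) `∫ f dμ1 ≤ ∫ f dμ2` for every bounded measurable local function `f` which is
nondecreasing in the configuration variable;
(ii) `μ1` and `μ2` have a common `α`-marginal `Q` and the conditional laws
satisfy `μ1(dη|α) ≤ μ2(dη|α)` stochastically for `Q`-a.e. `α`. -/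
theorem cond_stochastic_order_iff
    {A : Type*} [MetricSpace A] [CompactSpace A] [MeasurableSpace A] [BorelSpace A]
    {K : ℕ}
    (μ1 μ2 : Measure (A × Config K))
    [IsProbabilityMeasure μ1] [IsProbabilityMeasure μ2] :
    (∀ f : A × Config K → ℝ, Measurable f → (∃ C, ∀ p, |f p| ≤ C) →
        IsLocalFn f → (∀ α : A, Monotone fun η => f (α, η)) →
        ∫ p, f p ∂μ1 ≤ ∫ p, f p ∂μ2)
    ↔
    (μ1.fst = μ2.fst ∧
      ∃ κ1 κ2 : Kernel A (Config K), IsMarkovKernel κ1 ∧ IsMarkovKernel κ2 ∧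
        μ1 = μ1.fst ⊗ₘ κ1 ∧ μ2 = μ2.fst ⊗ₘ κ2 ∧
        ∀ᵐ α ∂μ1.fst, ∀ g : Config K → ℝ, Measurable g → (∃ C, ∀ η, |g η| ≤ C) →
          Monotone g → ∫ η, g η ∂(κ1 α) ≤ ∫ η, g η ∂(κ2 α)) := by
  classical
  constructor
  · -- (i) → (ii)
    intro hyp
    -- First: equality of the marginals on `A`.
    have hprodset : ∀ (n : ℕ) (s : Set A) (S : Set (Config K)), MeasurableSet s →
        (∀ η η' : Config K, (∀ x ∈ Finset.Icc (-(n:ℤ)) n, η x = η' x) → (η ∈ S → η' ∈ S)) →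
        IsUpperSet S → μ1 (s ×ˢ S) ≤ μ2 (s ×ˢ S) := by
      intro n s S hs hSloc hSup
      have hS : MeasurableSet S := measurableSet_of_local n hSloc
      set f : A × Config K → ℝ := (s ×ˢ S).indicator 1 with hf
      have hfm : Measurable f := (measurable_const.indicator (hs.prod hS))
      have hfb : ∃ C, ∀ p, |f p| ≤ C := by
        refine ⟨1, fun p => ?_⟩
        by_cases hp : p ∈ s ×ˢ S <;> simp [hf, Set.indicator_apply, hp]
      have hfloc : IsLocalFn f := by
        refine ⟨Finset.Icc (-(n:ℤ)) n, fun α η η' heq => ?_⟩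
        have hiff : (α, η) ∈ s ×ˢ S ↔ (α, η') ∈ s ×ˢ S := by
          constructor
          · rintro ⟨ha, hS'⟩; exact ⟨ha, hSloc η η' heq hS'⟩
          · rintro ⟨ha, hS'⟩; exact ⟨ha, hSloc η' η (fun x hx => (heq x hx).symm) hS'⟩
        simp only [hf, Set.indicator_apply]
        exact if_congr hiff rfl rfl
      have hfmono : ∀ α : A, Monotone fun η => f (α, η) := by
        intro α η η' hle
        by_cases hη : (α, η) ∈ s ×ˢ S
        · have hη' : (α, η') ∈ s ×ˢ S := ⟨hη.1, hSup hle hη.2⟩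
          simp [hf, Set.indicator_apply, hη, hη']
        · by_cases hη' : (α, η') ∈ s ×ˢ S <;>
            simp [hf, Set.indicator_apply, hη, hη']
      have := hyp f hfm hfb hfloc hfmono
      rw [hf, integral_indicator_one (hs.prod hS), integral_indicator_one (hs.prod hS)] at this
      exact (ENNReal.toReal_le_toReal (measure_ne_top _ _) (measure_ne_top _ _)).1 this
    -- marginal equality
    have hle : ∀ s : Set A, MeasurableSet s → μ1.fst s ≤ μ2.fst s := by
      intro s hs
      have h := hprodset 0 s Set.univ hs (fun _ _ _ h => h) isUpperSet_univ
      rw [Measure.fst_apply hs, Measure.fst_apply hs, ← Set.prod_univ]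
      exact h
    have hfst : μ1.fst = μ2.fst := by
      ext s hs
      refine le_antisymm (hle s hs) ?_
      have h1 := hle sᶜ hs.compl
      rw [prob_compl_eq_one_sub hs, prob_compl_eq_one_sub hs] at h1
      exact (ENNReal.sub_le_sub_iff_left prob_le_one ENNReal.one_ne_top).1 h1
    refine ⟨hfst, μ1.condKernel, μ2.condKernel, inferInstance, inferInstance,
      (μ1.disintegrate _).symm, (μ2.disintegrate _).symm, ?_⟩
    -- a.e. comparison of conditional kernels
    have hmeas1 : MeasurableSet (Set.univ : Set A) := MeasurableSet.univ
    -- countable family of local upper sets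
    have hcnt : ∀ᵐ α ∂μ1.fst,
        ∀ i : (Σ n : ℕ, Set ((Finset.Icc (-(n:ℤ)) n : Finset ℤ) → Fin (K + 1))),
        IsUpperSet ((fun (η : Config K) (x : (Finset.Icc (-(i.1:ℤ)) i.1 : Finset ℤ)) => η x) ⁻¹' i.2) →
          μ1.condKernel α ((fun (η : Config K) (x : (Finset.Icc (-(i.1:ℤ)) i.1 : Finset ℤ)) => η x) ⁻¹' i.2) ≤
          μ2.condKernel α ((fun (η : Config K) (x : (Finset.Icc (-(i.1:ℤ)) i.1 : Finset ℤ)) => η x) ⁻¹' i.2) := by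
      rw [ae_all_iff]
      intro i
      set S : Set (Config K) :=
        (fun (η : Config K) (x : (Finset.Icc (-(i.1:ℤ)) i.1 : Finset ℤ)) => η x) ⁻¹' i.2 with hSdef
      have hSloc : ∀ η η' : Config K,
          (∀ x ∈ Finset.Icc (-(i.1:ℤ)) i.1, η x = η' x) → (η ∈ S → η' ∈ S) := by
        intro η η' heq hη
        have hproj : (fun (x : (Finset.Icc (-(i.1:ℤ)) i.1 : Finset ℤ)) => η' x)
            = (fun (x : (Finset.Icc (-(i.1:ℤ)) i.1 : Finset ℤ)) => η x) :=
          funext fun x => (heq x.1 x.2).symm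
        exact Set.mem_preimage.2 (hproj ▸ Set.mem_preimage.1 hη)
      have hSmeas : MeasurableSet S := measurableSet_of_local i.1 hSloc
      by_cases hup : IsUpperSet S
      · have hsetineq : ∀ s : Set A, MeasurableSet s → μ1.fst s < ⊤ →
            ∫⁻ α in s, μ1.condKernel α S ∂μ1.fst ≤ ∫⁻ α in s, μ2.condKernel α S ∂μ1.fst := by
          intro s hs _
          have h := hprodset i.1 s S hs hSloc hup
          calc ∫⁻ α in s, μ1.condKernel α S ∂μ1.fst
              = μ1 (s ×ˢ S) := by
                conv_rhs => rw [← μ1.disintegrate μ1.condKernel]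
                rw [Measure.compProd_apply_prod hs hSmeas]
            _ ≤ μ2 (s ×ˢ S) := h
            _ = ∫⁻ α in s, μ2.condKernel α S ∂μ1.fst := by
                conv_lhs => rw [← μ2.disintegrate μ2.condKernel]
                rw [Measure.compProd_apply_prod hs hSmeas, hfst]
        have := ae_le_of_forall_setLIntegral_le_of_sigmaFinite
          (Kernel.measurable_coe _ hSmeas) hsetineq
        filter_upwards [this] with α h _
        exact h
      · exact ae_of_all _ fun α h => absurd h hup
    filter_upwards [hcnt] with α hα
    rintro g hgm ⟨C, hC⟩ hmono
    refine integral_mono_of_upper _ _ ?_ g hgm C hC hmono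
    intro U hU hUp
    refine meas_mono_of_upper_local _ _ ?_ hU hUp
    intro n S hup hSloc
    have hS : S = (fun (η : Config K) (x : (Finset.Icc (-(n:ℤ)) n : Finset ℤ)) => η x) ⁻¹'
        ((fun (η : Config K) (x : (Finset.Icc (-(n:ℤ)) n : Finset ℤ)) => η x) '' S) := by
      ext η; constructor
      · intro hη; exact Set.mem_preimage.2 ⟨η, hη, rfl⟩
      · rintro ⟨ξ, hξ, hproj⟩
        exact hSloc ξ η (fun x hx => congrFun hproj ⟨x, hx⟩) hξ
    have := hα ⟨n, (fun (η : Config K) (x : (Finset.Icc (-(n:ℤ)) n : Finset ℤ)) => η x) '' S⟩ (hS ▸ hup)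
    rw [hS]
    exact this
  · -- (ii) → (i)
    rintro ⟨hfst, κ1, κ2, hm1, hm2, hμ1, hμ2, hae⟩
    intro f hfm ⟨C, hC⟩ _ hfmono
    have hfi : ∀ (μ : Measure (A × Config K)) [IsProbabilityMeasure μ], Integrable f μ := by
      intro μ _
      exact ⟨hfm.aestronglyMeasurable,
        HasFiniteIntegral.of_bounded (C := C) (ae_of_all _ fun p => by
          simpa [Real.norm_eq_abs] using hC p)⟩
    have h1 : ∫ p, f p ∂μ1 = ∫ α, ∫ η, f (α, η) ∂(κ1 α) ∂μ1.fst := by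
      conv_lhs => rw [hμ1]
      exact Measure.integral_compProd (hμ1 ▸ hfi μ1)
    have h2 : ∫ p, f p ∂μ2 = ∫ α, ∫ η, f (α, η) ∂(κ2 α) ∂μ1.fst := by
      conv_lhs => rw [hμ2]
      rw [hfst]
      exact Measure.integral_compProd (hμ2 ▸ hfi μ2)
    rw [h1, h2]
    have hintmeas : ∀ (κ : Kernel A (Config K)) [IsMarkovKernel κ],
        Integrable (fun α => ∫ η, f (α, η) ∂(κ α)) μ1.fst := by
      intro κ _
      refine ⟨(hfm.stronglyMeasurable.integral_kernel_prod_right' (κ := κ)).aestronglyMeasurable,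
        HasFiniteIntegral.of_bounded (C := C) (ae_of_all _ fun α => ?_)⟩
      calc ‖∫ η, f (α, η) ∂(κ α)‖ ≤ C * ((κ α) Set.univ).toReal :=
            norm_integral_le_of_norm_le_const (ae_of_all _ fun η => by
              simpa [Real.norm_eq_abs] using hC (α, η))
        _ = C := by simp
    refine integral_mono_ae (hintmeas κ1) (hintmeas κ2) ?_
    filter_upwards [hae] with α hα
    exact hα (fun η => f (α, η)) (hfm.comp measurable_prodMk_left)
      ⟨C, fun η => hC (α, η)⟩ (hfmono α)
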